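/- Let β > 0 and let n, p be integers with 2 ≤ p ≤ n−1. For every A ∈ Skew(p) and B ∈ ℝ^{(n−p)×p} with (A,B) ≠ (0,0) satisfying the loop equation exp_m([[2βA, −Bᵀ],[B, 0]]) · I_{n×p} · exp_m((1−2β)A) = I_{n×p}, there exist A' ∈ Skew(p) and B' ∈ ℝ^{p×p} with (A',B') ≠ (0,0) satisfying the corresponding loop equation on St(2p,p), namely exp_m([[2βA', −B'ᵀ],[B', 0]]) · I_{2p×p} · exp_m((1−2β)A') = I_{2p×p}, and with β‖A'‖_F² + ‖B'‖_F² = β‖A‖_F² + ‖B‖_F². Consequently, the length of a shortest nontrivial geodesic loop on St_β(n,p) is at least the length of a shortest nontrivial geodesic loop on St_β(2p,p). -/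

import Mathlib

open Matrix

/-- The matrix exponential of a real square matrix. -/
noncomputable def mexp {N : Type*} [Fintype N] [DecidableEq N] (M : Matrix N N ℝ) :
    Matrix N N ℝ :=
  NormedSpace.exp M

/-- The squared Frobenius norm of a real matrix. -/
noncomputable def frobSq {m n : Type*} [Fintype m] [Fintype n] (A : Matrix m n ℝ) : ℝ :=
  ∑ i, ∑ j, (A i j) ^ 2

open Matrix NormedSpace Nat

attribute [local instance] Matrix.linftyOpNormedAddCommGroup Matrix.linftyOpNormedSpace
  Matrix.linftyOpNormedRing Matrix.linftyOpNormedAlgebra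

noncomputable def XZ {k : Type} [Fintype k] [DecidableEq k] (a G : Matrix k k ℝ) :
    ℕ → Matrix k k ℝ × Matrix k k ℝ
  | 0 => (1, 0)
  | j + 1 => (a * (XZ a G j).1 - G * (XZ a G j).2, (XZ a G j).1)

lemma XZ_pow {k l : Type} [Fintype k] [DecidableEq k] [Fintype l] [DecidableEq l]
    (a : Matrix k k ℝ) (B : Matrix l k ℝ) (j : ℕ) :
    (fromBlocks a (-Bᵀ) B 0) ^ j * fromRows (1 : Matrix k k ℝ) (0 : Matrix l k ℝ)
      = fromRows (XZ a (Bᵀ * B) j).1 (B * (XZ a (Bᵀ * B) j).2) := by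
  induction j with
  | zero => simp [XZ]
  | succ j ih =>
    rw [show fromBlocks a (-Bᵀ) B 0 ^ (j + 1) = fromBlocks a (-Bᵀ) B 0 * fromBlocks a (-Bᵀ) B 0 ^ j from pow_succ' _ _, Matrix.mul_assoc, ih, fromBlocks_mul_fromRows]
    simp only [XZ, Matrix.zero_mul, add_zero, Matrix.neg_mul, Matrix.mul_assoc,
      sub_eq_add_neg]

lemma exp_block {k : Type} [Fintype k] [DecidableEq k] (a G : Matrix k k ℝ) :
    ∃ SX SZ : Matrix k k ℝ, ∀ (l : Type) [Fintype l] [DecidableEq l] (B : Matrix l k ℝ),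
      Bᵀ * B = G →
      NormedSpace.exp (fromBlocks a (-Bᵀ) B 0) *
          fromRows (1 : Matrix k k ℝ) (0 : Matrix l k ℝ)
        = fromRows SX (B * SZ) := by
  refine ⟨(∑' (j : ℕ), ((j ! : ℝ))⁻¹ • (XZ a G j).1), (∑' (j : ℕ), ((j ! : ℝ))⁻¹ • (XZ a G j).2), ?_⟩
  intro l _ _ B hB
  subst hB
  set M : Matrix (k ⊕ l) (k ⊕ l) ℝ := fromBlocks a (-Bᵀ) B 0 with hM
  set F : Matrix (k ⊕ l) k ℝ := fromRows (1 : Matrix k k ℝ) (0 : Matrix l k ℝ) with hF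
  -- continuous linear maps extracting blocks of W * F
  let Φ₁ : Matrix (k ⊕ l) (k ⊕ l) ℝ →L[ℝ] Matrix k k ℝ :=
    { toFun := fun W => toRows₁ (W * F)
      map_add' := by intro x y; ext i j; simp [Matrix.add_mul, Matrix.toRows₁]
      map_smul' := by intro c x; ext i j; simp [Matrix.smul_mul, Matrix.toRows₁]
      cont := by
        apply continuous_matrix
        intro i j
        exact (continuous_id.matrix_mul continuous_const).matrix_elem _ _ }
  let Φ₂ : Matrix (k ⊕ l) (k ⊕ l) ℝ →L[ℝ] Matrix l k ℝ :=
    { toFun := fun W => toRows₂ (W * F)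
      map_add' := by intro x y; ext i j; simp [Matrix.add_mul, Matrix.toRows₂]
      map_smul' := by intro c x; ext i j; simp [Matrix.smul_mul, Matrix.toRows₂]
      cont := by
        apply continuous_matrix
        intro i j
        exact (continuous_id.matrix_mul continuous_const).matrix_elem _ _ }
  let ΨB : Matrix k k ℝ →L[ℝ] Matrix l k ℝ :=
    { toFun := fun X => B * X
      map_add' := by intro x y; exact Matrix.mul_add _ _ _
      map_smul' := by intro c x; exact (Matrix.mul_smul _ _ _)
      cont := continuous_const.matrix_mul continuous_id }
  have hsum : Summable fun j : ℕ => ((j ! : ℝ))⁻¹ • M ^ j := expSeries_summable' (𝕂 := ℝ) M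
  have hΦ₁pow : ∀ j : ℕ, Φ₁ (M ^ j) = (XZ a (Bᵀ * B) j).1 := by
    intro j
    show toRows₁ (M ^ j * F) = _
    rw [XZ_pow, toRows₁_fromRows]
  have hΦ₂pow : ∀ j : ℕ, Φ₂ (M ^ j) = B * (XZ a (Bᵀ * B) j).2 := by
    intro j
    show toRows₂ (M ^ j * F) = _
    rw [XZ_pow, toRows₂_fromRows]
  have hXsum : Summable fun j : ℕ => ((j ! : ℝ))⁻¹ • (XZ a (Bᵀ * B) j).1 := by
    refine (hsum.map (Φ₁ : Matrix (k ⊕ l) (k ⊕ l) ℝ →+ Matrix k k ℝ) Φ₁.continuous).congr ?_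
    intro j
    show Φ₁ (((j ! : ℝ))⁻¹ • M ^ j) = _
    rw [Φ₁.map_smul, hΦ₁pow]
  have hZshift : Summable fun j : ℕ => (((j + 1)! : ℝ))⁻¹ • (XZ a (Bᵀ * B) (j + 1)).2 := by
    refine Summable.of_norm_bounded (summable_norm_iff.mpr hXsum) ?_
    intro j
    show ‖(((j + 1)! : ℝ))⁻¹ • (XZ a (Bᵀ * B) j).1‖ ≤ _
    rw [norm_smul, norm_smul]
    apply mul_le_mul_of_nonneg_right _ (norm_nonneg _)
    rw [Real.norm_eq_abs, Real.norm_eq_abs, abs_of_nonneg (by positivity),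
      abs_of_nonneg (by positivity)]
    apply inv_anti₀ (by positivity)
    exact_mod_cast Nat.factorial_le (Nat.le_succ j)
  have hZsum : Summable fun j : ℕ => ((j ! : ℝ))⁻¹ • (XZ a (Bᵀ * B) j).2 :=
    (summable_nat_add_iff 1).mp hZshift
  have h1 : toRows₁ (NormedSpace.exp M * F) = ∑' (j : ℕ), ((j ! : ℝ))⁻¹ • (XZ a (Bᵀ * B) j).1 := by
    calc toRows₁ (NormedSpace.exp M * F) = Φ₁ (NormedSpace.exp M) := rfl
      _ = Φ₁ (∑' (j : ℕ), ((j ! : ℝ))⁻¹ • M ^ j) := by rw [NormedSpace.exp_eq_tsum ℝ]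
      _ = ∑' (j : ℕ), Φ₁ (((j ! : ℝ))⁻¹ • M ^ j) := Φ₁.map_tsum hsum
      _ = _ := by
        refine tsum_congr fun j => ?_
        rw [Φ₁.map_smul, hΦ₁pow]
  have h2 : toRows₂ (NormedSpace.exp M * F)
      = B * ∑' (j : ℕ), ((j ! : ℝ))⁻¹ • (XZ a (Bᵀ * B) j).2 := by
    calc toRows₂ (NormedSpace.exp M * F) = Φ₂ (NormedSpace.exp M) := rfl
      _ = Φ₂ (∑' (j : ℕ), ((j ! : ℝ))⁻¹ • M ^ j) := by rw [NormedSpace.exp_eq_tsum ℝ]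
      _ = ∑' (j : ℕ), Φ₂ (((j ! : ℝ))⁻¹ • M ^ j) := Φ₂.map_tsum hsum
      _ = ∑' (j : ℕ), ΨB (((j ! : ℝ))⁻¹ • (XZ a (Bᵀ * B) j).2) := by
        refine tsum_congr fun j => ?_
        rw [Φ₂.map_smul, hΦ₂pow, ΨB.map_smul]
        rfl
      _ = ΨB (∑' (j : ℕ), ((j ! : ℝ))⁻¹ • (XZ a (Bᵀ * B) j).2) := (ΨB.map_tsum hZsum).symm
      _ = _ := rfl
  conv_lhs => rw [← fromRows_toRows (NormedSpace.exp M * F), h1, h2]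

lemma frobSq_eq_trace {m l : Type*} [Fintype m] [Fintype l] (M : Matrix m l ℝ) :
    frobSq M = Matrix.trace (Mᵀ * M) := by
  unfold frobSq
  rw [Matrix.trace]
  simp only [Matrix.diag_apply, Matrix.mul_apply, Matrix.transpose_apply, sq]
  exact Finset.sum_comm

lemma transfer {q p : ℕ} (β : ℝ) (A : Matrix (Fin p) (Fin p) ℝ) (B : Matrix (Fin q) (Fin p) ℝ)
    (hA : Aᵀ = -A) (hnz : ¬(A = 0 ∧ B = 0))
    (hloop : mexp (Matrix.fromBlocks ((2 * β) • A) (-Bᵀ) B 0) *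
        Matrix.fromRows (1 : Matrix (Fin p) (Fin p) ℝ) (0 : Matrix (Fin q) (Fin p) ℝ) *
        mexp ((1 - 2 * β) • A) = Matrix.fromRows 1 0) :
    ∃ (A' : Matrix (Fin p) (Fin p) ℝ) (B' : Matrix (Fin p) (Fin p) ℝ),
      A'ᵀ = -A' ∧ ¬(A' = 0 ∧ B' = 0) ∧
      mexp (Matrix.fromBlocks ((2 * β) • A') (-B'ᵀ) B' 0) *
          Matrix.fromRows (1 : Matrix (Fin p) (Fin p) ℝ) (0 : Matrix (Fin p) (Fin p) ℝ) *
          mexp ((1 - 2 * β) • A') = Matrix.fromRows 1 0 ∧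
      β * frobSq A' + frobSq B' = β * frobSq A + frobSq B := by
  have hG : (Bᵀ * B).PosSemidef := by
    have := Matrix.posSemidef_conjTranspose_mul_self B
    rwa [Matrix.conjTranspose_eq_transpose_of_trivial] at this
  obtain ⟨B', hB'h, hB'B'⟩ : ∃ B' : Matrix (Fin p) (Fin p) ℝ, B'ᴴ = B' ∧ B' * B' = Bᵀ * B :=
    open scoped MatrixOrder in
    ⟨CFC.sqrt (Bᵀ * B), IsSelfAdjoint.of_nonneg (CFC.sqrt_nonneg _), CFC.sqrt_mul_sqrt_self _ hG.nonneg⟩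
  have hB't : B'ᵀ = B' := by
    rw [← Matrix.conjTranspose_eq_transpose_of_trivial]; exact hB'h
  have hB'eq : B'ᵀ * B' = Bᵀ * B := by rw [hB't, hB'B']
  obtain ⟨SX, SZ, hkey⟩ := exp_block ((2 * β) • A) (Bᵀ * B)
  have hkeyB := hkey _ B rfl
  have hkeyB' := hkey _ B' hB'eq
  simp only [mexp] at hloop ⊢
  set E := NormedSpace.exp ((1 - 2 * β) • A) with hE
  have hEunit : IsUnit E := Matrix.isUnit_exp _
  rw [hkeyB, fromRows_mul] at hloop
  obtain ⟨hSX, hBZ⟩ := Matrix.fromRows_inj hloop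
  have h0 : B * SZ = 0 := by
    have hdet : IsUnit E.det := (Matrix.isUnit_iff_isUnit_det _).mp hEunit
    have := congrArg (fun X => X * E⁻¹) hBZ
    simpa [Matrix.mul_assoc, Matrix.mul_nonsing_inv _ hdet] using this
  have hsq : (B' * SZ)ᴴ * (B' * SZ) = 0 := by
    rw [Matrix.conjTranspose_eq_transpose_of_trivial, Matrix.transpose_mul]
    calc SZᵀ * B'ᵀ * (B' * SZ) = SZᵀ * (B'ᵀ * B' * SZ) := by
          rw [Matrix.mul_assoc, Matrix.mul_assoc]
      _ = SZᵀ * (Bᵀ * B * SZ) := by rw [hB'eq]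
      _ = SZᵀ * Bᵀ * (B * SZ) := by rw [Matrix.mul_assoc, Matrix.mul_assoc]
      _ = 0 := by rw [h0, Matrix.mul_zero]
  have hB'SZ : B' * SZ = 0 := Matrix.conjTranspose_mul_self_eq_zero.mp hsq
  refine ⟨A, B', hA, ?_, ?_, ?_⟩
  · rintro ⟨hA0, hB'0⟩
    apply hnz
    refine ⟨hA0, ?_⟩
    have hBB : Bᴴ * B = 0 := by
      rw [Matrix.conjTranspose_eq_transpose_of_trivial, ← hB'B', hB'0, Matrix.mul_zero]
    exact Matrix.conjTranspose_mul_self_eq_zero.mp hBB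
  · rw [hkeyB', hB'SZ, fromRows_mul, hSX, Matrix.zero_mul]
  · rw [show frobSq B' = frobSq B by rw [frobSq_eq_trace, frobSq_eq_trace, hB'eq]]


set_option maxHeartbeats 2000000 in
lemma exp_rot_one {k l : Type} [Fintype k] [DecidableEq k] [Fintype l] [DecidableEq l]
    (i0 : k) (j0 : l) :
    NormedSpace.exp (fromBlocks (0 : Matrix k k ℝ)
        (-(single j0 i0 (2 * Real.pi))ᵀ) (single j0 i0 (2 * Real.pi)) 0)
      = 1 := by
  set J : Matrix (Fin 2) (Fin 2) ℝ := !![0,-1;1,0] with hJdef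
  have hJ : J * J = -1 := by
    ext i j
    fin_cases i <;> fin_cases j <;>
      simp [hJdef, Matrix.mul_apply, Fin.sum_univ_two, Matrix.one_apply]
  set Φ : ℂ →ₐ[ℝ] Matrix (Fin 2) (Fin 2) ℝ := Complex.liftAux J hJ with hΦdef
  have hΦc : Continuous Φ := Φ.toLinearMap.continuous_of_finiteDimensional
  have hexpP : NormedSpace.exp ((2 * Real.pi) • J) = 1 := by
    have h1 : Φ ((2 * Real.pi : ℝ) • Complex.I) = (2 * Real.pi) • J := by
      rw [_root_.map_smul, hΦdef, Complex.liftAux_apply_I]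
    calc NormedSpace.exp ((2 * Real.pi) • J)
        = NormedSpace.exp (Φ ((2 * Real.pi : ℝ) • Complex.I)) := by rw [h1]
      _ = Φ (NormedSpace.exp ((2 * Real.pi : ℝ) • Complex.I)) :=
          (NormedSpace.map_exp Φ hΦc _).symm
      _ = 1 := by
          have h2 : ((2 * Real.pi : ℝ) • Complex.I) = 2 * (Real.pi : ℂ) * Complex.I := by
            rw [Complex.real_smul]
            push_cast
            ring
          rw [h2, ← Complex.exp_eq_exp_ℂ,
            Complex.exp_two_pi_mul_I, _root_.map_one]
  set c : ℝ := 2 * Real.pi with hc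
  set B₀ : Matrix l k ℝ := single j0 i0 c with hB₀
  set ι : Fin 2 → k ⊕ l := ![Sum.inl i0, Sum.inr j0] with hι
  set V : Matrix (k ⊕ l) (Fin 2) ℝ := Matrix.of fun r a => if r = ι a then 1 else 0 with hV
  have hVV : Vᵀ * V = 1 := by
    ext a b
    fin_cases a <;> fin_cases b <;>
      simp [hV, hι, Matrix.mul_apply, Matrix.one_apply, Fintype.sum_sum_type,
        Finset.sum_ite_eq']
  let eL : Matrix (Fin 2) (Fin 2) ℝ →L[ℝ] Matrix (k ⊕ l) (k ⊕ l) ℝ :=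
    { toFun := fun X => V * X * Vᵀ
      map_add' := by intro x y; show V * (x + y) * Vᵀ = _; rw [Matrix.mul_add, Matrix.add_mul]
      map_smul' := by intro r x; show V * (r • x) * Vᵀ = _; rw [Matrix.mul_smul, Matrix.smul_mul]; rfl
      cont := (continuous_const.matrix_mul continuous_id).matrix_mul continuous_const }
  have he_mul : ∀ X Y, eL (X * Y) = eL X * eL Y := by
    intro X Y
    show V * (X * Y) * Vᵀ = V * X * Vᵀ * (V * Y * Vᵀ)
    calc V * (X * Y) * Vᵀ = V * X * (Vᵀ * V) * (Y * Vᵀ) := by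
          rw [hVV, Matrix.mul_one]; simp only [Matrix.mul_assoc]
      _ = V * X * Vᵀ * (V * Y * Vᵀ) := by simp only [Matrix.mul_assoc]
  have hM₀ : fromBlocks (0 : Matrix k k ℝ) (-B₀ᵀ) B₀ 0 = eL (c • J) := by
    show _ = V * (c • J) * Vᵀ
    ext r s
    rcases r with i | j <;> rcases s with i' | j' <;>
      simp [hV, hι, hJdef, hB₀, Matrix.mul_apply, Fin.sum_univ_two, Matrix.single,
        Fintype.sum_sum_type, Matrix.fromBlocks, ite_and, eq_comm (a := i0), eq_comm (a := j0)] <;>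
      split_ifs <;> simp_all <;> ring
  set M₀ : Matrix (k ⊕ l) (k ⊕ l) ℝ := fromBlocks (0 : Matrix k k ℝ) (-B₀ᵀ) B₀ 0 with hM₀def
  have hpow : ∀ j : ℕ, M₀ ^ (j + 1) = eL ((c • J) ^ (j + 1)) := by
    intro j
    induction j with
    | zero => simpa using hM₀
    | succ j ih =>
      rw [show M₀ ^ (j + 1 + 1) = M₀ ^ (j + 1) * M₀ from pow_succ _ _, ih, hM₀,
        ← he_mul, ← pow_succ]
  have hsum2 : Summable fun j : ℕ => ((j ! : ℝ))⁻¹ • (c • J) ^ j :=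
    expSeries_summable' (𝕂 := ℝ) _
  have hsumM : Summable fun j : ℕ => ((j ! : ℝ))⁻¹ • M₀ ^ j :=
    expSeries_summable' (𝕂 := ℝ) _
  have hshift : Summable fun j : ℕ => (((j + 1)! : ℝ))⁻¹ • (c • J) ^ (j + 1) :=
    (summable_nat_add_iff 1).mpr hsum2
  have htail : (∑' j : ℕ, (((j + 1)! : ℝ))⁻¹ • (c • J) ^ (j + 1)) = 0 := by
    have hexp' : (∑' j : ℕ, ((j ! : ℝ))⁻¹ • (c • J) ^ j) = 1 := by
      rw [← hexpP, NormedSpace.exp_eq_tsum ℝ]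
    have h := Summable.tsum_eq_zero_add hsum2
    rw [hexp', pow_zero, Nat.factorial_zero, Nat.cast_one, inv_one, one_smul] at h
    exact (left_eq_add.mp h)
  calc NormedSpace.exp M₀ = ∑' j : ℕ, ((j ! : ℝ))⁻¹ • M₀ ^ j := by
        rw [NormedSpace.exp_eq_tsum ℝ]
    _ = ((0! : ℝ))⁻¹ • M₀ ^ 0 + ∑' j : ℕ, (((j + 1)! : ℝ))⁻¹ • M₀ ^ (j + 1) :=
        Summable.tsum_eq_zero_add hsumM
    _ = 1 + eL (∑' j : ℕ, (((j + 1)! : ℝ))⁻¹ • (c • J) ^ (j + 1)) := by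
        rw [(eL.map_tsum hshift)]
        congr 1
        · simp
        · exact tsum_congr fun j => by rw [hpow j, eL.map_smul]
    _ = 1 := by rw [htail, map_zero, add_zero]

/-- Every nontrivial geodesic loop on `St_β(n,p)` gives rise to a nontrivial geodesic loop on
`St_β(2p,p)` of the same β-length. Consequently, the length of a shortest nontrivial geodesic
loop on `St_β(n,p)` is at least the length of a shortest nontrivial geodesic loop on
`St_β(2p,p)`. -/
theorem loop_reduction_to_square_case (n p : ℕ) (hp : 2 ≤ p) (hn : p + 1 ≤ n)
    (β : ℝ) (hβ : 0 < β) :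
    (∀ (A : Matrix (Fin p) (Fin p) ℝ) (B : Matrix (Fin (n - p)) (Fin p) ℝ),
        Aᵀ = -A → ¬(A = 0 ∧ B = 0) →
        mexp (Matrix.fromBlocks ((2 * β) • A) (-Bᵀ) B 0) *
            Matrix.fromRows (1 : Matrix (Fin p) (Fin p) ℝ)
              (0 : Matrix (Fin (n - p)) (Fin p) ℝ) *
            mexp ((1 - 2 * β) • A) = Matrix.fromRows 1 0 →
        ∃ (A' : Matrix (Fin p) (Fin p) ℝ) (B' : Matrix (Fin p) (Fin p) ℝ),
          A'ᵀ = -A' ∧ ¬(A' = 0 ∧ B' = 0) ∧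
          mexp (Matrix.fromBlocks ((2 * β) • A') (-B'ᵀ) B' 0) *
              Matrix.fromRows (1 : Matrix (Fin p) (Fin p) ℝ)
                (0 : Matrix (Fin p) (Fin p) ℝ) *
              mexp ((1 - 2 * β) • A') = Matrix.fromRows 1 0 ∧
          β * frobSq A' + frobSq B' = β * frobSq A + frobSq B) ∧
    sInf {L : ℝ | ∃ (A : Matrix (Fin p) (Fin p) ℝ) (B : Matrix (Fin (n - p)) (Fin p) ℝ),
        Aᵀ = -A ∧ ¬(A = 0 ∧ B = 0) ∧
        mexp (Matrix.fromBlocks ((2 * β) • A) (-Bᵀ) B 0) *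
            Matrix.fromRows (1 : Matrix (Fin p) (Fin p) ℝ)
              (0 : Matrix (Fin (n - p)) (Fin p) ℝ) *
            mexp ((1 - 2 * β) • A) = Matrix.fromRows 1 0 ∧
        L = Real.sqrt (β * frobSq A + frobSq B)} ≥
      sInf {L : ℝ | ∃ (A' : Matrix (Fin p) (Fin p) ℝ) (B' : Matrix (Fin p) (Fin p) ℝ),
        A'ᵀ = -A' ∧ ¬(A' = 0 ∧ B' = 0) ∧
        mexp (Matrix.fromBlocks ((2 * β) • A') (-B'ᵀ) B' 0) *
            Matrix.fromRows (1 : Matrix (Fin p) (Fin p) ℝ)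
              (0 : Matrix (Fin p) (Fin p) ℝ) *
            mexp ((1 - 2 * β) • A') = Matrix.fromRows 1 0 ∧
        L = Real.sqrt (β * frobSq A' + frobSq B')} := by
  constructor
  · intro A B hA hnz hloop
    exact transfer β A B hA hnz hloop
  · apply csInf_le_csInf
    · refine ⟨0, ?_⟩
      rintro L ⟨A', B', -, -, -, rfl⟩
      exact Real.sqrt_nonneg _
    · have hq : 0 < n - p := by omega
      have hp0 : 0 < p := by omega
      refine ⟨Real.sqrt (β * frobSq (0 : Matrix (Fin p) (Fin p) ℝ) +
          frobSq (single (⟨0, hq⟩ : Fin (n - p)) (⟨0, hp0⟩ : Fin p) (2 * Real.pi))),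
        0, single (⟨0, hq⟩ : Fin (n - p)) (⟨0, hp0⟩ : Fin p) (2 * Real.pi),
        by simp, ?_, ?_, rfl⟩
      · rintro ⟨-, hB0⟩
        have h := congrFun (congrFun hB0 ⟨0, hq⟩) ⟨0, hp0⟩
        simp [Matrix.single] at h
      · simp only [mexp, smul_zero, NormedSpace.exp_zero, Matrix.mul_one]
        rw [exp_rot_one, Matrix.one_mul]
    · rintro L ⟨A, B, h1, h2, h3, rfl⟩
      obtain ⟨A', B', g1, g2, g3, g4⟩ := transfer β A B h1 h2 h3
      exact ⟨A', B', g1, g2, g3, by rw [g4]⟩
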